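/- Consider a monotone negative feedback loop in 2n variables: ẇ₁ = −b₁w₁ + a₁f₁(w_{2n}); for each even index i, ẇᵢ = −dᵢwᵢ + cᵢw_{i−1}; and for each odd index i ≥ 3, ẇᵢ = −bᵢwᵢ + aᵢfᵢ(w_{i−1}); where all constants aᵢ, bᵢ, cᵢ, dᵢ are strictly positive, each fᵢ : ℝ → ℝ is continuous and monotone with 0 ≤ fᵢ ≤ 1, and an odd number of the functions fᵢ are antitone (nonincreasing) while the rest are isotone (nondecreasing). Then the system has exactly one equilibrium point, i.e., exactly one w ∈ ℝ^{2n} at which all right-hand sides vanish. -/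

import Mathlib

open Fin.NatCast

/-- The chain of compositions `g k ∘ ⋯ ∘ g 1 ∘ g 0` around the loop. -/
def chainC (n : ℕ) (g : Fin (n + 1) → ℝ → ℝ) : ℝ → ℕ → ℝ
  | t, 0 => g 0 t
  | t, k + 1 => g (↑(k + 1)) (chainC n g t k)

/-- Lemma 3 of the paper: a monotone negative feedback loop has
exactly one equilibrium.  Writing the 2(n+1) variables as n+1 pairs
(xᵢ, yᵢ) = (w_{2i+1}, w_{2i+2}) with dynamics ẋᵢ = −bᵢxᵢ + aᵢfᵢ(y_{i−1})
(indices cyclic) and ẏᵢ = −dᵢyᵢ + cᵢxᵢ, where all constants are positive, each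
fᵢ is continuous and monotone with values in [0, 1], and the set of antitone
regulation functions has odd cardinality, there is a unique point at which all
right-hand sides vanish. -/
theorem negative_feedback_loop_unique_equilibrium
    (n : ℕ)
    (a b c d : Fin (n + 1) → ℝ) (f : Fin (n + 1) → ℝ → ℝ)
    (ha : ∀ i, 0 < a i) (hb : ∀ i, 0 < b i) (hc : ∀ i, 0 < c i) (hd : ∀ i, 0 < d i)
    (hfc : ∀ i, Continuous (f i))
    (hf0 : ∀ i z, 0 ≤ f i z) (hf1 : ∀ i z, f i z ≤ 1)
    (s : Finset (Fin (n + 1))) (hodd : Odd s.card)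
    (hanti : ∀ i ∈ s, Antitone (f i)) (hmono : ∀ i ∉ s, Monotone (f i)) :
    ∃! p : (Fin (n + 1) → ℝ) × (Fin (n + 1) → ℝ),
      ∀ i, -b i * p.1 i + a i * f i (p.2 (i - 1)) = 0 ∧
        -d i * p.2 i + c i * p.1 i = 0 := by
  -- Basic setup
  set K : Fin (n + 1) → ℝ := fun i => c i * a i / (d i * b i) with hK_def
  have hK : ∀ i, 0 < K i := fun i =>
    div_pos (mul_pos (hc i) (ha i)) (mul_pos (hd i) (hb i))
  set g : Fin (n + 1) → ℝ → ℝ := fun i z => K i * f i z with hg_def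
  have hg_mono : ∀ i ∉ s, Monotone (g i) := fun i hi =>
    (hmono i hi).const_mul (hK i).le
  have hg_anti : ∀ i ∈ s, Antitone (g i) := fun i hi =>
    (hanti i hi).const_mul (hK i).le
  have hg_cont : ∀ i, Continuous (g i) := fun i => continuous_const.mul (hfc i)
  have hg_bd : ∀ i z, 0 ≤ g i z ∧ g i z ≤ K i := fun i z =>
    ⟨mul_nonneg (hK i).le (hf0 i z),
     by simpa using mul_le_mul_of_nonneg_left (hf1 i z) (hK i).le⟩
  set C : ℝ → ℕ → ℝ := chainC n g with hC_def
  -- continuity of the chain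
  have hC_cont : ∀ k, Continuous (fun t => C t k) := by
    intro k
    induction k with
    | zero => exact hg_cont 0
    | succ k ih => exact (hg_cont _).comp ih
  -- monotonicity / antitonicity of the chain with parity tracking
  have key : ∀ k, k ≤ n →
      (Monotone (fun t => C t k) ∧ Even ((s.filter (fun i : Fin (n + 1) => (i : ℕ) ≤ k)).card)) ∨
      (Antitone (fun t => C t k) ∧ Odd ((s.filter (fun i : Fin (n + 1) => (i : ℕ) ≤ k)).card)) := by
    intro k
    induction k with
    | zero =>
      intro _
      have hfe : s.filter (fun i : Fin (n + 1) => (i : ℕ) ≤ 0) = s.filter (fun i : Fin (n + 1) => i = 0) := by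
        apply Finset.filter_congr
        intro i _
        simp only [Nat.le_zero, Fin.ext_iff, Fin.val_zero]
      rw [hfe, Finset.filter_eq']
      by_cases h0 : (0 : Fin (n + 1)) ∈ s
      · right
        exact ⟨hg_anti 0 h0, by simp [h0]⟩
      · left
        exact ⟨hg_mono 0 h0, by simp [h0]⟩
    | succ k ih =>
      intro hk
      have hk' : k ≤ n := Nat.le_of_succ_le hk
      have hlt : k + 1 < n + 1 := Nat.succ_lt_succ hk
      have hval : ((↑(k + 1) : Fin (n + 1)) : ℕ) = k + 1 := Fin.val_cast_of_lt hlt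
      -- card splitting
      have hsplit : s.filter (fun i : Fin (n + 1) => (i : ℕ) ≤ k + 1) =
          s.filter (fun i : Fin (n + 1) => (i : ℕ) ≤ k) ∪ s.filter (fun i : Fin (n + 1) => (i : ℕ) = k + 1) := by
        ext i
        simp only [Finset.mem_filter, Finset.mem_union, ← and_or_left]
        exact and_congr_right fun _ => by omega
      have hdisj : Disjoint (s.filter (fun i : Fin (n + 1) => (i : ℕ) ≤ k))
          (s.filter (fun i : Fin (n + 1) => (i : ℕ) = k + 1)) := by
        rw [Finset.disjoint_left]
        intro i h1 h2
        simp only [Finset.mem_filter] at h1 h2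
        omega
      have hf2 : s.filter (fun i : Fin (n + 1) => (i : ℕ) = k + 1) =
          s.filter (fun i : Fin (n + 1) => i = (↑(k + 1) : Fin (n + 1))) := by
        apply Finset.filter_congr
        intro i _
        rw [Fin.ext_iff, hval]
      have hcard : (s.filter (fun i : Fin (n + 1) => (i : ℕ) ≤ k + 1)).card =
          (s.filter (fun i : Fin (n + 1) => (i : ℕ) ≤ k)).card +
          (if (↑(k + 1) : Fin (n + 1)) ∈ s then 1 else 0) := by
        rw [hsplit, Finset.card_union_of_disjoint hdisj, hf2, Finset.filter_eq']
        split_ifs with hmem <;> simp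
      have hcomp : (fun t => C t (k + 1)) = (g ↑(k + 1)) ∘ (fun t => C t k) := rfl
      by_cases hmem : (↑(k + 1) : Fin (n + 1)) ∈ s
      · rcases ih hk' with ⟨hm, he⟩ | ⟨hm, he⟩
        · right
          have hpar : Odd (s.filter (fun i : Fin (n + 1) => (i : ℕ) ≤ k + 1)).card := by
            rw [hcard, if_pos hmem]
            exact Even.add_one he
          refine ⟨?_, hpar⟩
          rw [hcomp]; exact (hg_anti _ hmem).comp_monotone hm
        · left
          have hpar : Even (s.filter (fun i : Fin (n + 1) => (i : ℕ) ≤ k + 1)).card := by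
            rw [hcard, if_pos hmem]
            exact Odd.add_one he
          refine ⟨?_, hpar⟩
          rw [hcomp]; exact (hg_anti _ hmem).comp hm
      · rcases ih hk' with ⟨hm, he⟩ | ⟨hm, he⟩
        · left
          have hpar : Even (s.filter (fun i : Fin (n + 1) => (i : ℕ) ≤ k + 1)).card := by
            rw [hcard, if_neg hmem]
            simpa using he
          refine ⟨?_, hpar⟩
          rw [hcomp]; exact (hg_mono _ hmem).comp hm
        · right
          have hpar : Odd (s.filter (fun i : Fin (n + 1) => (i : ℕ) ≤ k + 1)).card := by
            rw [hcard, if_neg hmem]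
            simpa using he
          refine ⟨?_, hpar⟩
          rw [hcomp]; exact (hg_mono _ hmem).comp_antitone hm
  -- the loop map is antitone
  have hfull : s.filter (fun i : Fin (n + 1) => (i : ℕ) ≤ n) = s :=
    Finset.filter_true_of_mem fun i _ => Nat.lt_succ_iff.mp i.isLt
  have hanti_h : Antitone (fun t => C t n) := by
    rcases key n le_rfl with ⟨_, he⟩ | ⟨hm, _⟩
    · rw [hfull] at he
      exact absurd he (Nat.not_even_iff_odd.mpr hodd)
    · exact hm
  -- boundedness of the loop map
  have hC_bd : ∀ t k, 0 ≤ C t k ∧ C t k ≤ K ↑k := by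
    intro t k
    cases k with
    | zero => simpa [hC_def, chainC] using hg_bd 0 t
    | succ k => exact hg_bd _ _
  set M : ℝ := K ↑n with hM_def
  have hM : 0 < M := hK _
  -- existence of a fixed point by IVT
  have hfix : ∃ t, C t n = t := by
    have hcont : ContinuousOn (fun t => C t n - t) (Set.Icc 0 M) :=
      ((hC_cont n).sub continuous_id).continuousOn
    have hsub := intermediate_value_Icc' (le_of_lt hM) hcont
    have h0mem : (0 : ℝ) ∈ Set.Icc (C M n - M) (C 0 n - 0) := by
      constructor
      · have := (hC_bd M n).2
        simp only [← hM_def] at this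
        linarith
      · have := (hC_bd 0 n).1
        linarith
    obtain ⟨t, _, ht⟩ := hsub h0mem
    have ht' : C t n - t = 0 := ht
    exact ⟨t, by linarith⟩
  obtain ⟨t, ht⟩ := hfix
  -- uniqueness of the fixed point
  have hfix_uniq : ∀ u, C u n = u → u = t := by
    intro u hu
    rcases lt_trichotomy u t with h | h | h
    · have h1 : C t n ≤ C u n := hanti_h h.le
      rw [ht, hu] at h1
      linarith
    · exact h
    · have h1 : C u n ≤ C t n := hanti_h h.le
      rw [ht, hu] at h1
      linarith
  -- build the equilibrium
  set Y : Fin (n + 1) → ℝ := fun i => C t i with hY_def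
  have hY : ∀ i : Fin (n + 1), Y i = g i (Y (i - 1)) := by
    intro i
    rcases eq_or_ne i 0 with h0 | h0
    · subst h0
      have hv : ((0 - 1 : Fin (n + 1)) : ℕ) = n := by
        rw [Fin.coe_sub_one]; simp
      show C t 0 = g 0 (C t ((0 - 1 : Fin (n + 1)) : ℕ))
      rw [hv, ht]
      rfl
    · obtain ⟨k, hk⟩ : ∃ k, (i : ℕ) = k + 1 :=
        Nat.exists_eq_succ_of_ne_zero (fun h => h0 (Fin.ext h))
      have hik : i = ↑(k + 1) := by
        apply Fin.ext
        rw [Fin.val_cast_of_lt (hk ▸ i.isLt), hk]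
      have hv : ((i - 1 : Fin (n + 1)) : ℕ) = k := by
        rw [Fin.coe_sub_one, if_neg h0, hk]
        omega
      show C t (i : ℕ) = g i (C t ((i - 1 : Fin (n + 1)) : ℕ))
      rw [hv, hk]
      show g ↑(k + 1) (C t k) = g i (C t k)
      rw [hik]
  refine ⟨(fun i => a i * f i (Y (i - 1)) / b i, Y), ?_, ?_⟩
  · intro i
    have hbne : b i ≠ 0 := (hb i).ne'
    have hdne : d i ≠ 0 := (hd i).ne'
    constructor
    · show -b i * (a i * f i (Y (i - 1)) / b i) + a i * f i (Y (i - 1)) = 0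
      field_simp
      ring
    · have h1 : Y i = K i * f i (Y (i - 1)) := hY i
      show -d i * Y i + c i * (a i * f i (Y (i - 1)) / b i) = 0
      rw [h1]
      show -d i * (c i * a i / (d i * b i) * f i (Y (i - 1))) +
        c i * (a i * f i (Y (i - 1)) / b i) = 0
      field_simp
      ring
  · rintro ⟨x, y⟩ hq
    have hbne : ∀ i, b i ≠ 0 := fun i => (hb i).ne'
    have hdne : ∀ i, d i ≠ 0 := fun i => (hd i).ne'
    have hq1 : ∀ i, x i = a i * f i (y (i - 1)) / b i := by
      intro i
      have h : -b i * x i + a i * f i (y (i - 1)) = 0 := (hq i).1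
      rw [eq_div_iff (hbne i)]
      linarith
    have hq2 : ∀ i, y i = g i (y (i - 1)) := by
      intro i
      have h : -d i * y i + c i * x i = 0 := (hq i).2
      rw [hq1 i] at h
      have hb' : b i ≠ 0 := hbne i
      have hd' : d i ≠ 0 := hdne i
      show y i = c i * a i / (d i * b i) * f i (y (i - 1))
      field_simp at h ⊢
      linarith
    set u : ℝ := y (0 - 1) with hu_def
    have hchain : ∀ k, k ≤ n → y ↑k = C u k := by
      intro k
      induction k with
      | zero =>
        intro _
        have : y (0 : Fin (n + 1)) = g 0 u := by rw [hq2 0]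
        simpa [hC_def, chainC] using this
      | succ k ih =>
        intro hk
        have hk' : k ≤ n := Nat.le_of_succ_le hk
        have hlt : k + 1 < n + 1 := Nat.succ_lt_succ hk
        have hval : ((↑(k + 1) : Fin (n + 1)) : ℕ) = k + 1 := Fin.val_cast_of_lt hlt
        have hne : (↑(k + 1) : Fin (n + 1)) ≠ 0 := by
          intro h
          rw [h] at hval
          simp at hval
        have hsub : (↑(k + 1) : Fin (n + 1)) - 1 = ↑k := by
          apply Fin.ext
          rw [Fin.coe_sub_one, if_neg hne, hval,
            Fin.val_cast_of_lt (Nat.lt_succ_of_le hk')]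
          omega
        have := hq2 ↑(k + 1)
        rw [hsub, ih hk'] at this
        exact this
    have hu_last : (0 - 1 : Fin (n + 1)) = ↑n := by
      apply Fin.ext
      rw [Fin.coe_sub_one, Fin.val_cast_of_lt (Nat.lt_succ_self n)]
      simp
    have hu_fix : C u n = u := by
      rw [← hchain n le_rfl, hu_def, hu_last]
    have hut : u = t := hfix_uniq u hu_fix
    have hy : y = Y := by
      funext i
      have h1 : y i = C u (i : ℕ) := by
        have := hchain (i : ℕ) (Nat.lt_succ_iff.mp i.isLt)
        rwa [Fin.cast_val_eq_self] at this
      rw [h1, hut]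
    have hx : x = fun i => a i * f i (Y (i - 1)) / b i := by
      funext i
      rw [hq1 i, hy]
    exact Prod.ext hx hy
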